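/- Let (Γ, {F_α}_{α∈A}) be a group with Frobenii, and let ℛ = {ρ_λ}_{λ∈Λ} and ℛ' = {ρ'_λ}_{λ∈Λ} be two compatible systems of rank n semisimple representations of Γ defined over a number field E, admitting a common witnessing subset 𝒳 ⊂ A×Λ for the compatibility conditions of both systems. If ρ_{λ_0} ≅ ρ'_{λ_0} for some λ_0 ∈ Λ, then ρ_λ ≅ ρ'_λ for every λ ∈ Λ. -/

import Mathlib

/-!
Formalization of statements from "Independence of Algebraic Monodromy Groups in
Compatible Systems" by F. Amadio Guidi.

Linear algebraic subgroups of `GL_n` over a field `k` are encoded through their sets of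
`k`-points together with base-change operations given by the common zero locus (in any
extension) of all polynomials over `k` vanishing on the set; connectedness is taken for
the Zariski topology, reductivity via semisimplicity of the tautological representation
over an algebraic closure (which characterizes it in characteristic zero), and tori via
geometric diagonalizability.
-/

set_option maxHeartbeats 1600000

noncomputable section

open IsDedekindDomain NumberField MvPolynomial

namespace Paper

/-! ### Dirichlet density -/

/-- A set `S` of natural numbers (thought of as a set of rational primes) has Dirichlet
density one: `(∑_{p ∈ S prime} p^{-s}) / log (1/(s-1)) → 1` as `s → 1⁺`. -/
def DirichletDensityOne (S : Set ℕ) : Prop :=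
  Filter.Tendsto
    (fun s : ℝ =>
      (∑' p : {p : ℕ // p ∈ S ∧ p.Prime}, ((p : ℕ) : ℝ) ^ (-s)) / Real.log ((s - 1)⁻¹))
    (nhdsWithin 1 (Set.Ioi 1)) (nhds 1)

/-! ### Places of number fields -/

/-- The finite places of a number field: the height one primes of its ring of integers. -/
abbrev Places (K : Type) [Field K] [NumberField K] := HeightOneSpectrum (𝓞 K)

/-- The completion of a number field at a finite place. -/
abbrev Kv (K : Type) [Field K] [NumberField K] (v : Places K) : Type := v.adicCompletion K

/-- The residue characteristic of a finite place. -/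
def resChar (K : Type) [Field K] [NumberField K] (v : Places K) : ℕ :=
  ringChar (𝓞 K ⧸ v.asIdeal)

/-- A set of finite places of a number field has residual Dirichlet density one if the
set of residue characteristics of its members has Dirichlet density one. -/
def ResidualDensityOne {K : Type} [Field K] [NumberField K] (Λ : Set (Places K)) : Prop :=
  DirichletDensityOne {p | ∃ v ∈ Λ, resChar K v = p}

/-- The place `w` of `L` lies above the place `v` of `E`, relative to the embedding
`g : E →+* L`. -/
def LiesAboveVia {E L : Type} [Field E] [NumberField E] [Field L] [NumberField L]
    (g : E →+* L) (w : Places L) (v : Places E) : Prop :=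
  w.asIdeal.comap (NumberField.RingOfIntegers.mapRingHom g) = v.asIdeal

/-! ### Linear algebraic subgroups of `GL_n`, via points and vanishing ideals -/

/-- `GL_n` over a commutative ring. -/
abbrev GLn (n : ℕ) (R : Type) [CommRing R] := GL (Fin n) R

/-- The functorial map `GL_n(R) → GL_n(S)` induced by a ring homomorphism. -/
def mapGL {n : ℕ} {R S : Type} [CommRing R] [CommRing S] (f : R →+* S) :
    GLn n R →* GLn n S :=
  Units.map (RingHom.toMonoidHom (RingHom.mapMatrix f))

/-- The matrix coordinates of an element of `GL_n`. -/
def gval {n : ℕ} {R : Type} [CommRing R] (g : GLn n R) : Fin n × Fin n → R :=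
  fun p => (g : Matrix (Fin n) (Fin n) R) p.1 p.2

/-- Given `S ⊆ GL_n(k)` and a ring homomorphism `f : k → K`, the set of `K`-points of the
base change along `f` of the Zariski closure of `S`: the common zero locus in `GL_n(K)` of
all polynomials over `k` vanishing on `S`. -/
def zeroExt {n : ℕ} {k K : Type} [CommRing k] [CommRing K] (f : k →+* K)
    (S : Set (GLn n k)) : Set (GLn n K) :=
  {h | ∀ P : MvPolynomial (Fin n × Fin n) k,
    (∀ g ∈ S, eval (gval g) P = 0) → eval (gval h) (MvPolynomial.map f P) = 0}

/-- The Zariski topology on `GL_n(k)`. -/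
def glTop (n : ℕ) (k : Type) [CommRing k] : TopologicalSpace (GLn n k) :=
  TopologicalSpace.generateFrom
    {U | ∃ P : MvPolynomial (Fin n × Fin n) k, U = {g | eval (gval g) P ≠ 0}}

/-- The algebraic monodromy group of a representation: the Zariski closure of its image. -/
def monodromyGroup {n : ℕ} {Γ : Type} [Group Γ] {k : Type} [Field k]
    (ρ : Γ →* GLn n k) : Set (GLn n k) :=
  zeroExt (RingHom.id k) (Set.range ρ)

/-- The neutral component `G_λ°` of the algebraic monodromy group: the connected component
of the identity for the Zariski topology. -/
def monodromyGroup₀ {n : ℕ} {Γ : Type} [Group Γ] {k : Type} [Field k]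
    (ρ : Γ →* GLn n k) : Set (GLn n k) :=
  letI := glTop n k
  connectedComponentIn (monodromyGroup ρ) 1

/-- Two closed subvarieties of `GL_n`, defined over subfields `k₁, k₂` of `K` via `f₁, f₂`,
are conjugate over `K`: some `g ∈ GL_n(K)` conjugates the geometric points of one base
change onto those of the other. -/
def ConjOverVia {n : ℕ} {k₁ k₂ K : Type} [Field k₁] [Field k₂] [Field K]
    (f₁ : k₁ →+* K) (f₂ : k₂ →+* K) (S₁ : Set (GLn n k₁)) (S₂ : Set (GLn n k₂)) : Prop :=
  ∃ g : GLn n K,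
    (fun h => mapGL (algebraMap K (AlgebraicClosure K)) g * h *
        (mapGL (algebraMap K (AlgebraicClosure K)) g)⁻¹) ''
      zeroExt ((algebraMap K (AlgebraicClosure K)).comp f₁) S₁ =
    zeroExt ((algebraMap K (AlgebraicClosure K)).comp f₂) S₂

/-! ### Irreducibility, semisimplicity, reductivity -/

/-- A subset of `GL_n(k)` stabilizes a submodule of `k^n`. -/
def StabSet {n : ℕ} {k : Type} [CommRing k] (S : Set (GLn n k))
    (W : Submodule k (Fin n → k)) : Prop :=
  ∀ g ∈ S, ∀ x ∈ W, Matrix.mulVec (g : Matrix (Fin n) (Fin n) k) x ∈ W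

/-- A subset of `GL_n(k)` acts irreducibly on `k^n`. -/
def IrreducibleSet {n : ℕ} {k : Type} [Field k] (S : Set (GLn n k)) : Prop :=
  (⊥ : Submodule k (Fin n → k)) ≠ ⊤ ∧ ∀ W, StabSet S W → W = ⊥ ∨ W = ⊤

/-- A subset of `GL_n(k)` acts semisimply on `k^n`. -/
def SemisimpleSet {n : ℕ} {k : Type} [Field k] (S : Set (GLn n k)) : Prop :=
  ∀ W, StabSet S W → ∃ W', StabSet S W' ∧ IsCompl W W'

/-- Base change of points to the algebraic closure. -/
def toBar {n : ℕ} {k : Type} [Field k] : GLn n k →* GLn n (AlgebraicClosure k) :=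
  mapGL (algebraMap k (AlgebraicClosure k))

/-- A representation is absolutely irreducible if its image acts irreducibly after base
change to an algebraic closure. -/
def AbsIrreducibleRep {n : ℕ} {Γ : Type} [Group Γ] {k : Type} [Field k]
    (ρ : Γ →* GLn n k) : Prop :=
  IrreducibleSet (Set.range (fun γ => toBar (ρ γ)))

/-- A representation is semisimple: its image acts semisimply after base change to an
algebraic closure. -/
def SemisimpleRep {n : ℕ} {Γ : Type} [Group Γ] {k : Type} [Field k]
    (ρ : Γ →* GLn n k) : Prop :=
  SemisimpleSet (Set.range (fun γ => toBar (ρ γ)))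

/-- Absolute Lie-irreducibility: the restriction to every open subgroup is absolutely
irreducible. -/
def AbsLieIrreducibleRep {n : ℕ} {Γ : Type} [Group Γ] [TopologicalSpace Γ] {k : Type}
    [Field k] (ρ : Γ →* GLn n k) : Prop :=
  ∀ Δ : Subgroup Γ, IsOpen (Δ : Set Γ) →
    IrreducibleSet ((fun γ => toBar (ρ γ)) '' (Δ : Set Γ))

/-- Lie-irreducibility: the restriction to every open subgroup is irreducible. -/
def LieIrreducibleRep {n : ℕ} {Γ : Type} [Group Γ] [TopologicalSpace Γ] {k : Type}
    [Field k] (ρ : Γ →* GLn n k) : Prop :=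
  ∀ Δ : Subgroup Γ, IsOpen (Δ : Set Γ) →
    IrreducibleSet ((fun γ => ρ γ) '' (Δ : Set Γ))

/-- Isomorphism of two `GL_n(k)`-valued representations over the algebraic closure. -/
def IsoOverBar {n : ℕ} {Γ : Type} [Group Γ] {k : Type} [Field k]
    (ρ₁ ρ₂ : Γ →* GLn n k) : Prop :=
  ∃ P : GLn n (AlgebraicClosure k), ∀ γ, toBar (ρ₂ γ) = P * toBar (ρ₁ γ) * P⁻¹

/-! ### Predicates on algebraic subgroups -/

/-- `S` is Zariski closed in `GL_n(k)`. -/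
def IsZClosed {n : ℕ} {k : Type} [Field k] (S : Set (GLn n k)) : Prop :=
  zeroExt (RingHom.id k) S = S

/-- A subset of a group closed under the group operations. -/
def MulClosedSet {G : Type} [Group G] (S : Set G) : Prop :=
  (1 : G) ∈ S ∧ (∀ a ∈ S, ∀ b ∈ S, a * b ∈ S) ∧ ∀ a ∈ S, a⁻¹ ∈ S

/-- `S ⊆ GL_n(k)` is an algebraic subgroup: Zariski closed, with points over every field
extension forming a subgroup. -/
def IsAlgSubgroup {n : ℕ} {k : Type} [Field k] (S : Set (GLn n k)) : Prop :=
  IsZClosed S ∧ ∀ (K : Type) [Field K], ∀ f : k →+* K, MulClosedSet (zeroExt f S)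

/-- `S` is (geometrically) connected. -/
def GeomConnected {n : ℕ} {k : Type} [Field k] (S : Set (GLn n k)) : Prop :=
  letI := glTop n (AlgebraicClosure k)
  IsConnected (zeroExt (algebraMap k (AlgebraicClosure k)) S)

/-- `S ⊆ GL_n(k)` is reductive: its geometric points act semisimply on the standard
representation (this characterizes reductivity in characteristic zero). -/
def ReductiveSet {n : ℕ} {k : Type} [Field k] (S : Set (GLn n k)) : Prop :=
  SemisimpleSet (zeroExt (algebraMap k (AlgebraicClosure k)) S)

/-- A set of diagonal elements of `GL_n`. -/
def DiagSet {n : ℕ} {k : Type} [CommRing k] (T : Set (GLn n k)) : Prop :=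
  ∀ h ∈ T, ∀ i j : Fin n, i ≠ j → (h : Matrix (Fin n) (Fin n) k) i j = 0

/-- `T ⊆ GL_n(k)` is a torus: a connected algebraic subgroup, diagonalizable over the
algebraic closure. -/
def IsTorus {n : ℕ} {k : Type} [Field k] (T : Set (GLn n k)) : Prop :=
  IsAlgSubgroup T ∧ GeomConnected T ∧
    ∃ g : GLn n (AlgebraicClosure k),
      DiagSet ((fun h => g * h * g⁻¹) '' zeroExt (algebraMap k (AlgebraicClosure k)) T)

/-- `T` is a torus split over `k`: it is diagonalizable by an element of `GL_n(k)`. -/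
def IsSplitTorus {n : ℕ} {k : Type} [Field k] (T : Set (GLn n k)) : Prop :=
  IsTorus T ∧ ∃ g : GLn n k, DiagSet ((fun h => g * h * g⁻¹) '' T)

/-- `T` is a maximal torus in `S`. -/
def IsMaximalTorusIn {n : ℕ} {k : Type} [Field k] (T S : Set (GLn n k)) : Prop :=
  IsTorus T ∧ T ⊆ S ∧ ∀ T', IsTorus T' → T ⊆ T' → T' ⊆ S → T' = T

/-- `S` is a connected reductive algebraic subgroup of `GL_n(k)`. -/
def IsConnReductive {n : ℕ} {k : Type} [Field k] (S : Set (GLn n k)) : Prop :=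
  IsAlgSubgroup S ∧ GeomConnected S ∧ ReductiveSet S

/-- `S` is a split connected reductive algebraic subgroup of `GL_n(k)`. -/
def IsSplitConnReductive {n : ℕ} {k : Type} [Field k] (S : Set (GLn n k)) : Prop :=
  IsConnReductive S ∧ ∃ T, IsMaximalTorusIn T S ∧ IsSplitTorus T

/-! ### Compatible systems -/

/-- Definition 1.1 of the paper: a compatible system of rank `n` continuous representations
of a group `Γ` with Frobenius elements `Fr : A → Γ`, with coefficients in the number field
`E`, indexed by the set `Λ` of finite places of `E`, with witnessing set `X ⊆ A × Λ`. -/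
structure IsCompatibleSystem {Γ A : Type} [Group Γ] [TopologicalSpace Γ] (Fr : A → Γ)
    (E : Type) [Field E] [NumberField E] (n : ℕ) (Λ : Set (Places E))
    (ρ : ∀ v : Places E, Γ →* GLn n (Kv E v)) (X : Set (A × Places E)) : Prop where
  subset : ∀ p ∈ X, p.2 ∈ Λ
  continuous : ∀ v ∈ Λ, Continuous (ρ v)
  cofinite : ∀ α : A, {v | v ∈ Λ ∧ (α, v) ∉ X}.Finite
  charpoly_indep : ∀ α : A, ∃ q : Polynomial E, ∀ v : Places E, (α, v) ∈ X →
    Matrix.charpoly ((ρ v (Fr α) : GLn n (Kv E v)) : Matrix (Fin n) (Fin n) (Kv E v)) =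
      q.map (algebraMap E (Kv E v))
  frob_dense : ∀ (m : ℕ) (vs : Fin m → Places E), (∀ i, vs i ∈ Λ) →
    Dense (Fr '' {α | ∀ i, (α, vs i) ∈ X})

/-- An Artin representation: one whose kernel contains an open normal subgroup, i.e. which
factors through a finite quotient. -/
def IsArtinRep {Γ : Type} [Group Γ] [TopologicalSpace Γ] {d : ℕ} {k : Type} [Field k]
    (ω : Γ →* GLn d k) : Prop :=
  ∃ N : Subgroup Γ, N.Normal ∧ IsOpen (N : Set Γ) ∧ N ≤ ω.ker

/-! ### Induced representations and Lie-irreducible decompositions -/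

open Classical in
/-- The matrix of the induced representation `Ind_H^Γ (σ ⊗ ω)` at `γ`, with respect to a
transversal `t` of `H` in `Γ`. -/
def indMat {Γ : Type} [Group Γ] {F : Type} [Field F] (H : Subgroup Γ) (t : Γ ⧸ H → Γ)
    {m d : ℕ} (σ : ↥H →* GLn m F) (ω : ↥H →* GLn d F) (γ : Γ) :
    Matrix ((Γ ⧸ H) × (Fin m × Fin d)) ((Γ ⧸ H) × (Fin m × Fin d)) F :=
  fun p q =>
    if h : (t p.1)⁻¹ * γ * t q.1 ∈ H then
      ((σ ⟨(t p.1)⁻¹ * γ * t q.1, h⟩ : GLn m F) : Matrix (Fin m) (Fin m) F) p.2.1 q.2.1 *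
      ((ω ⟨(t p.1)⁻¹ * γ * t q.1, h⟩ : GLn d F) : Matrix (Fin d) (Fin d) F) p.2.2 q.2.2
    else 0

/-- The matrix-valued function `ρM` on `Γ` is isomorphic to `⊕ᵢ Ind_{Γᵢ}^Γ (σᵢ ⊗ ωᵢ)`:
for some transversals, some identification of the total index set with `Fin n` (which in
particular forces `∑ᵢ mᵢ dᵢ [Γ:Γᵢ] = n`), and some base change matrix `P`, the two matrix
representations agree. -/
def DecompIso {Γ : Type} [Group Γ] {F : Type} [Field F] {n kk : ℕ}
    (ρM : Γ → Matrix (Fin n) (Fin n) F) (Gi : Fin kk → Subgroup Γ) (mi di : Fin kk → ℕ)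
    (σ : ∀ i, ↥(Gi i) →* GLn (mi i) F) (ω : ∀ i, ↥(Gi i) →* GLn (di i) F) : Prop :=
  ∃ t : ∀ i, Γ ⧸ Gi i → Γ,
    (∀ i c, (QuotientGroup.mk (t i c) : Γ ⧸ Gi i) = c) ∧
    ∃ (e : (Σ i : Fin kk, (Γ ⧸ Gi i) × (Fin (mi i) × Fin (di i))) ≃ Fin n) (P : GLn n F),
      ∀ γ : Γ,
        ρM γ = (P : Matrix (Fin n) (Fin n) F) *
          (Matrix.reindex e e
            (Matrix.blockDiagonal' fun i => indMat (Gi i) (t i) (σ i) (ω i) γ)) *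
          ((P⁻¹ : GLn n F) : Matrix (Fin n) (Fin n) F)

/-- Definition 4.2 of the paper: the compatible system `ρ` admits a Lie-irreducible
decomposition over the finite extension `E'` of `E`: there are open subgroups `Γᵢ ≤ Γ`,
compatible systems `σᵢ` of absolutely Lie-irreducible representations of `Γᵢ` with
coefficients in `E'` indexed by residual-density-one sets `Λᵢ` of places of `E'` (with the
Frobenii of `Γᵢ` being those Frobenii of `Γ` lying in `Γᵢ`), and Artin representations
`ωᵢ` of `Γᵢ`, with `ρ_λ ≅ ⊕ᵢ Ind_{Γᵢ}^Γ (σ_{i,λ} ⊗ ωᵢ)` over `E'` for every place of `E'`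
in `⋂ᵢ Λᵢ` lying above a place of `Λ`. -/
def HasLieIrredDecomp {Γ A : Type} [Group Γ] [TopologicalSpace Γ] (Fr : A → Γ)
    (E : Type) [Field E] [NumberField E] (n : ℕ) (Λ : Set (Places E))
    (ρ : ∀ v : Places E, Γ →* GLn n (Kv E v))
    (E' : Type) [Field E'] [NumberField E'] (g : E →+* E') : Prop :=
  ∃ (kk : ℕ) (Gi : Fin kk → Subgroup Γ) (mi di : Fin kk → ℕ)
    (Λi : Fin kk → Set (Places E'))
    (σ : ∀ i, ∀ w : Places E', ↥(Gi i) →* GLn (mi i) (Kv E' w))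
    (ω : ∀ i, ↥(Gi i) →* GLn (di i) E'),
    (∀ i, IsOpen ((Gi i : Set Γ))) ∧
    (∀ i, ResidualDensityOne (Λi i)) ∧
    (∀ i, ∃ Xi : Set ({α : A // Fr α ∈ Gi i} × Places E'),
      IsCompatibleSystem (fun α : {α : A // Fr α ∈ Gi i} => (⟨Fr α.1, α.2⟩ : ↥(Gi i)))
        E' (mi i) (Λi i) (σ i) Xi) ∧
    (∀ i, ∀ w ∈ Λi i, AbsLieIrreducibleRep (σ i w)) ∧
    (∀ i, IsArtinRep (ω i)) ∧
    (∀ v ∈ Λ, ∀ w : Places E', (∀ i, w ∈ Λi i) → LiesAboveVia g w v →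
      ∃ f : Kv E v →+* Kv E' w,
        f.comp (algebraMap E (Kv E v)) = (algebraMap E' (Kv E' w)).comp g ∧
        DecompIso (fun γ => ((mapGL f (ρ v γ) : GLn n (Kv E' w)) :
            Matrix (Fin n) (Fin n) (Kv E' w)))
          Gi mi di (fun i => σ i w) (fun i => (mapGL (algebraMap E' (Kv E' w))).comp (ω i)))

/-! ### Galois groups and Frobenius elements -/

/-- The absolute Galois group of `F` (automorphisms of an algebraic closure; for the
purposes of this paper this agrees with `Gal(F^sep/F)`), with its Krull topology. -/
abbrev Gal (F : Type) [Field F] := AlgebraicClosure F ≃ₐ[F] AlgebraicClosure F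

/-- `γ` is a geometric Frobenius element at the place of `F` given by the valuation
subring `v`: for some extension `A` of `v` to the algebraic closure, `γ⁻¹` is in the
decomposition group at `A` and induces the `#k(v)`-power (arithmetic Frobenius) map on
the residue field of `A`. -/
def IsGeomFrobAtVal (F : Type) [Field F] (γ : Gal F) (v : ValuationSubring F) : Prop :=
  ∃ A : ValuationSubring (AlgebraicClosure F),
    A.comap (algebraMap F (AlgebraicClosure F)) = v ∧
    ∃ h : γ⁻¹ ∈ A.decompositionSubgroup F,
      ∀ x : IsLocalRing.ResidueField A,
        MulSemiringAction.toRingAut (A.decompositionSubgroup F) (IsLocalRing.ResidueField A)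
          ⟨γ⁻¹, h⟩ x = x ^ Nat.card (IsLocalRing.ResidueField v)

/-- `γ` is a geometric Frobenius element at the finite place `v` of the number field `F`. -/
def IsGeomFrobAtPlace (F : Type) [Field F] [NumberField F] (γ : Gal F) (v : Places F) :
    Prop :=
  ∃ A : ValuationSubring (AlgebraicClosure F),
    A.comap (algebraMap F (AlgebraicClosure F)) = (v.valuation F).valuationSubring ∧
    ∃ h : γ⁻¹ ∈ A.decompositionSubgroup F,
      ∀ x : IsLocalRing.ResidueField A,
        MulSemiringAction.toRingAut (A.decompositionSubgroup F) (IsLocalRing.ResidueField A)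
          ⟨γ⁻¹, h⟩ x = x ^ Nat.card (𝓞 F ⧸ v.asIdeal)

end Paper

open Paper


-- ===================== auxiliary development (Brauer-Nesbitt) =====================
set_option synthInstance.maxHeartbeats 1000000

open LinearMap Module Submodule

noncomputable section BN

/-- The action of `b : B` as a `K`-linear endomorphism. -/
def smulEndK (K : Type*) {B : Type*} (M : Type*) [Field K] [Ring B] [Algebra K B]
    [AddCommGroup M] [Module B M] [Module K M] [IsScalarTower K B M] (b : B) :
    M →ₗ[K] M where
  toFun := (b • ·)
  map_add' := fun x y => smul_add b x y
  map_smul' := fun k x => by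
    simp only [RingHom.id_apply]
    rw [← algebraMap_smul B k x, ← mul_smul, ← Algebra.commutes, mul_smul, algebraMap_smul]

@[simp] lemma smulEndK_apply (K : Type*) {B : Type*} (M : Type*) [Field K] [Ring B] [Algebra K B]
    [AddCommGroup M] [Module B M] [Module K M] [IsScalarTower K B M] (b : B) (x : M) :
    smulEndK K M b x = b • x := rfl

section JD

variable {B : Type*} [Ring B] {W : Type*} [AddCommGroup W] [Module B W]

instance piSemisimple [IsSemisimpleModule B W] (m : ℕ) :
    IsSemisimpleModule B (Fin m → W) := by
  apply isSemisimpleModule_of_isSemisimpleModule_submodule'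
    (p := fun i : Fin m => LinearMap.range (LinearMap.single B (fun _ : Fin m => W) i))
  · intro i
    exact IsSemisimpleModule.congr
      (LinearEquiv.ofInjective (LinearMap.single B (fun _ : Fin m => W) i) (Pi.single_injective (M := fun _ : Fin m => W) i)).symm
  · rw [eq_top_iff]
    intro x _
    rw [← Finset.univ_sum_single x]
    exact Submodule.sum_mem _ fun i _ => Submodule.mem_iSup_of_mem i ⟨x i, rfl⟩

/-- Jacobson-density-style lemma. -/
theorem jacobson_density' [IsSemisimpleModule B W] (f : W →+ W)
    (hf : ∀ (ψ : W →ₗ[B] W) (x : W), f (ψ x) = ψ (f x))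
    {m : ℕ} (w : Fin m → W) : ∃ b : B, ∀ i, b • w i = f (w i) := by
  set N : Submodule B (Fin m → W) := Submodule.span B {w} with hN
  obtain ⟨N', hN'⟩ := exists_isCompl N
  set π : (Fin m → W) →ₗ[B] (Fin m → W) := N.subtype ∘ₗ N.projectionOnto N' hN' with hπ
  have hwN : w ∈ N := Submodule.mem_span_singleton_self w
  have hπw : π w = w := by
    have : π w = ((⟨w, hwN⟩ : N) : Fin m → W) := by
      simp only [hπ, LinearMap.comp_apply]
      rw [show w = ((⟨w, hwN⟩ : N) : Fin m → W) from rfl,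
        Submodule.projectionOnto_apply_left hN']
      rfl
    simpa using this
  have key : ∀ (ψ : (Fin m → W) →ₗ[B] (Fin m → W)) (x : Fin m → W) (i : Fin m),
      f (ψ x i) = ψ (fun j => f (x j)) i := by
    intro ψ x i
    have h1 : ψ x i = ∑ j, ((LinearMap.proj i) ∘ₗ ψ ∘ₗ (LinearMap.single B (fun _ : Fin m => W) j)) (x j) := by
      conv_lhs => rw [← Finset.univ_sum_single x]
      rw [map_sum]
      simp [LinearMap.proj, LinearMap.single]
      rfl
    have h2 : ψ (fun j => f (x j)) i
        = ∑ j, ((LinearMap.proj i) ∘ₗ ψ ∘ₗ (LinearMap.single B (fun _ : Fin m => W) j)) (f (x j)) := by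
      conv_lhs => rw [show (fun j => f (x j)) = ∑ j, Pi.single j (f (x j)) from (Finset.univ_sum_single _).symm]
      rw [map_sum]
      simp [LinearMap.proj, LinearMap.single]
      rfl
    rw [h1, h2, map_sum]
    refine Finset.sum_congr rfl fun j _ => ?_
    exact hf ((LinearMap.proj i) ∘ₗ ψ ∘ₗ (LinearMap.single B (fun _ : Fin m => W) j)) (x j)
  have hmem : (fun i => f (w i)) ∈ N := by
    have : (fun i => f (w i)) = π (fun j => f (w j)) := by
      funext i
      have := key π w i
      rw [hπw] at this
      exact this
    rw [this, hπ]
    exact ((N.projectionOnto N' hN') (fun j => f (w j))).2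
  obtain ⟨b, hb⟩ := Submodule.mem_span_singleton.mp hmem
  exact ⟨b, fun i => congrFun hb i⟩

end JD

section Isotypic

variable {B : Type*} [Ring B] {W : Type*} [AddCommGroup W] [Module B W] [IsSemisimpleModule B W]

theorem simple_le_sSup_iso {𝒮 : Set (Submodule B W)}
    (h𝒮 : ∀ U ∈ 𝒮, IsSimpleModule B ↥U) {T : Submodule B W} (hT : IsSimpleModule B ↥T)
    (hle : T ≤ sSup 𝒮) : ∃ U ∈ 𝒮, Nonempty (↥T ≃ₗ[B] ↥U) := by
  obtain ⟨T', hc⟩ := exists_isCompl T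
  set π := T.linearProjOfIsCompl T' hc with hπ
  by_contra hcon
  push_neg at hcon
  have hU : ∀ U ∈ 𝒮, U ≤ LinearMap.ker π := by
    intro U hUS
    intro x hx
    by_contra hne
    set φ : ↥U →ₗ[B] ↥T := π ∘ₗ U.subtype with hφdef
    have hφ : φ ≠ 0 := by
      intro h0
      apply hne
      have : φ ⟨x, hx⟩ = 0 := by rw [h0]; rfl
      simpa [hφdef] using this
    haveI := h𝒮 U hUS
    haveI := hT
    have hbij := LinearMap.bijective_of_ne_zero (f := φ) hφ
    exact (hcon U hUS).false (LinearEquiv.ofBijective φ hbij).symm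
  have hTle : T ≤ LinearMap.ker π := le_trans hle (sSup_le hU)
  haveI := hT.nontrivial
  obtain ⟨x, hx⟩ := exists_ne (0 : ↥T)
  have h1 : π ↑x = x := Submodule.linearProjOfIsCompl_apply_left hc x
  have h2 : π ↑x = 0 := hTle x.2
  exact hx (by rw [← h1, h2])

theorem map_le_sSup_class {𝒮 : Set (Submodule B W)} (h1 : ∀ U ∈ 𝒮, IsSimpleModule B ↥U)
    (h2 : ∀ U ∈ 𝒮, ∀ T : Submodule B W, IsSimpleModule B ↥T → Nonempty (↥T ≃ₗ[B] ↥U) → T ∈ 𝒮)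
    (ψ : W →ₗ[B] W) : Submodule.map ψ (sSup 𝒮) ≤ sSup 𝒮 := by
  rw [Submodule.map_le_iff_le_comap]
  apply sSup_le
  intro U hU
  rw [← Submodule.map_le_iff_le_comap]
  rcases eq_or_ne (Submodule.map ψ U) ⊥ with h | h
  · simp [h]
  · haveI := h1 U hU
    set φ : ↥U →ₗ[B] W := ψ ∘ₗ U.subtype with hφdef
    have hrange : LinearMap.range φ = Submodule.map ψ U := by
      rw [hφdef, LinearMap.range_comp, Submodule.range_subtype]
    rcases eq_bot_or_eq_top (LinearMap.ker φ) with hk | hk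
    · have hinj : Function.Injective φ := LinearMap.ker_eq_bot.mp hk
      have e : ↥U ≃ₗ[B] ↥(Submodule.map ψ U) :=
        (LinearEquiv.ofInjective φ hinj).trans (LinearEquiv.ofEq _ _ hrange)
      haveI : IsSimpleModule B ↥(Submodule.map ψ U) := IsSimpleModule.congr e.symm
      exact le_sSup (h2 U hU _ this ⟨e.symm⟩)
    · exfalso
      apply h
      rw [← hrange, LinearMap.range_eq_bot]
      exact LinearMap.ker_eq_top.mp hk

variable (S : Submodule B W)

def isoClass : Set (Submodule B W) := {T | IsSimpleModule B ↥T ∧ Nonempty (↥T ≃ₗ[B] ↥S)}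

def nonIsoClass : Set (Submodule B W) := {T | IsSimpleModule B ↥T ∧ ¬ Nonempty (↥T ≃ₗ[B] ↥S)}

theorem isCompl_isotypic : IsCompl (sSup (isoClass S)) (sSup (nonIsoClass S)) := by
  constructor
  · rw [disjoint_iff]
    rcases IsSemisimpleModule.eq_bot_or_exists_simple_le
      (sSup (isoClass S) ⊓ sSup (nonIsoClass S)) with h | ⟨T, hle, hT⟩
    · exact h
    · exfalso
      obtain ⟨U, hU, ⟨e⟩⟩ := simple_le_sSup_iso (fun _ h => h.1) hT (hle.trans inf_le_left)
      obtain ⟨U', hU', ⟨e'⟩⟩ := simple_le_sSup_iso (fun _ h => h.1) hT (hle.trans inf_le_right)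
      exact hU'.2 ⟨e'.symm.trans (e.trans hU.2.some)⟩
  · rw [codisjoint_iff, eq_top_iff, ← IsSemisimpleModule.sSup_simples_eq_top B W]
    apply sSup_le
    intro T hT
    by_cases h : Nonempty (↥T ≃ₗ[B] ↥S)
    · exact le_sup_of_le_left (le_sSup ⟨hT, h⟩)
    · exact le_sup_of_le_right (le_sSup ⟨hT, h⟩)

theorem map_le_isoClass (ψ : W →ₗ[B] W) :
    Submodule.map ψ (sSup (isoClass S)) ≤ sSup (isoClass S) :=
  map_le_sSup_class (fun _ h => h.1)
    (fun U hU T hT ⟨e⟩ => ⟨hT, ⟨e.trans hU.2.some⟩⟩) ψ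

theorem map_le_nonIsoClass (ψ : W →ₗ[B] W) :
    Submodule.map ψ (sSup (nonIsoClass S)) ≤ sSup (nonIsoClass S) :=
  map_le_sSup_class (fun _ h => h.1)
    (fun U hU T hT ⟨e⟩ => ⟨hT, fun ⟨e'⟩ => hU.2 ⟨e.symm.trans e'⟩⟩) ψ

end Isotypic

end BN

noncomputable section BN2

open LinearMap Module Submodule

section TraceHelpers

variable {B : Type*} [Ring B] (K : Type*) [Field K] [Algebra K B]
variable {M : Type*} [AddCommGroup M] [Module B M] [Module K M] [IsScalarTower K B M]

/-- The identity between a `B`-submodule with restricted scalars and itself. -/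
def restrictK (p : Submodule B M) : ↥(p.restrictScalars K) ≃ₗ[K] ↥p where
  toFun x := ⟨x.1, x.2⟩
  invFun x := ⟨x.1, x.2⟩
  map_add' _ _ := rfl
  map_smul' _ _ := rfl
  left_inv _ := rfl
  right_inv _ := rfl

instance (priority := 900) fdSubmodule [FiniteDimensional K M] (p : Submodule B M) :
    FiniteDimensional K ↥p :=
  Module.Finite.equiv (restrictK K p)

theorem trace_smulEndK_eq_of_equiv {N : Type*} [AddCommGroup N] [Module B N] [Module K N]
    [IsScalarTower K B N] (e : M ≃ₗ[B] N) (b : B) :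
    trace K M (smulEndK K M b) = trace K N (smulEndK K N b) := by
  have hc : (e.restrictScalars K).conj (smulEndK K M b) = smulEndK K N b := by
    ext x
    simp only [LinearEquiv.conj_apply, LinearMap.comp_apply, LinearEquiv.coe_coe,
      LinearEquiv.restrictScalars_apply, smulEndK_apply, map_smul]
    exact congrArg (b • ·) (e.apply_symm_apply x)
  rw [← hc, trace_conj']

theorem smulEndK_one : smulEndK K M (1 : B) = LinearMap.id := by
  ext x; simp

theorem trace_smulEndK_one [FiniteDimensional K M] :
    trace K M (smulEndK K M (1 : B)) = (finrank K M : K) := by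
  rw [smulEndK_one, trace_id]

theorem trace_smulEndK_isCompl [FiniteDimensional K M] {p q : Submodule B M}
    (h : IsCompl p q) (b : B) :
    trace K M (smulEndK K M b)
      = trace K ↥p (smulEndK K ↥p b) + trace K ↥q (smulEndK K ↥q b) := by
  set e := Submodule.prodEquivOfIsCompl p q h with he
  have hc : (e.restrictScalars K).conj ((smulEndK K ↥p b).prodMap (smulEndK K ↥q b))
      = smulEndK K M b := by
    ext x
    have h1 : ∀ y : ↥p × ↥q, (smulEndK K ↥p b).prodMap (smulEndK K ↥q b) y = b • y := fun y => rfl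
    simp only [LinearEquiv.conj_apply, LinearMap.comp_apply, LinearEquiv.coe_coe,
      LinearEquiv.restrictScalars_apply, h1, map_smul,
      smulEndK_apply]
    exact congrArg (b • ·) (e.apply_symm_apply x)
  rw [← hc, trace_conj', trace_prodMap']

end TraceHelpers

section ProdSS

variable {B : Type*} [Ring B] {M N : Type*} [AddCommGroup M] [Module B M]
  [AddCommGroup N] [Module B N]

instance prodSemisimple [IsSemisimpleModule B M] [IsSemisimpleModule B N] :
    IsSemisimpleModule B (M × N) := by
  apply isSemisimpleModule_of_isSemisimpleModule_submodule'
    (p := fun b : Bool => if b then LinearMap.range (LinearMap.inl B M N)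
      else LinearMap.range (LinearMap.inr B M N))
  · intro b
    cases b
    · exact IsSemisimpleModule.congr
        (LinearEquiv.ofInjective (LinearMap.inr B M N) LinearMap.inr_injective).symm
    · exact IsSemisimpleModule.congr
        (LinearEquiv.ofInjective (LinearMap.inl B M N) LinearMap.inl_injective).symm
  · rw [eq_top_iff]
    rintro ⟨x, y⟩ -
    have hxy : (x, y) = LinearMap.inl B M N x + LinearMap.inr B M N y := by simp
    rw [hxy]
    exact add_mem
      (Submodule.mem_iSup_of_mem true ⟨x, rfl⟩)
      (Submodule.mem_iSup_of_mem false ⟨y, rfl⟩)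

end ProdSS

universe uM

theorem iso_of_traceEq (B : Type*) [Ring B] (K : Type*) [Field K] [CharZero K] [Algebra K B] :
    ∀ (d : ℕ) (M N : Type uM) [AddCommGroup M] [AddCommGroup N]
      [Module B M] [Module B N] [Module K M] [Module K N]
      [IsScalarTower K B M] [IsScalarTower K B N]
      [FiniteDimensional K M] [FiniteDimensional K N]
      [IsSemisimpleModule B M] [IsSemisimpleModule B N],
      finrank K M ≤ d →
      (∀ b : B, trace K M (smulEndK K M b) = trace K N (smulEndK K N b)) →
      Nonempty (M ≃ₗ[B] N) := by
  have hdimEq : ∀ (M N : Type uM) [AddCommGroup M] [AddCommGroup N]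
      [Module B M] [Module B N] [Module K M] [Module K N]
      [IsScalarTower K B M] [IsScalarTower K B N]
      [FiniteDimensional K M] [FiniteDimensional K N],
      (∀ b : B, trace K M (smulEndK K M b) = trace K N (smulEndK K N b)) →
      finrank K M = finrank K N := by
    intro M N _ _ _ _ _ _ _ _ _ _ htr
    have h1 := htr 1
    rw [trace_smulEndK_one, trace_smulEndK_one] at h1
    exact_mod_cast h1
  have hzero : ∀ (M N : Type uM) [AddCommGroup M] [AddCommGroup N]
      [Module B M] [Module B N] [Module K M] [Module K N]
      [IsScalarTower K B M] [IsScalarTower K B N]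
      [FiniteDimensional K M] [FiniteDimensional K N],
      finrank K M = 0 →
      (∀ b : B, trace K M (smulEndK K M b) = trace K N (smulEndK K N b)) →
      Nonempty (M ≃ₗ[B] N) := by
    intro M N _ _ _ _ _ _ _ _ _ _ h0 htr
    have h0' : finrank K N = 0 := (hdimEq M N htr) ▸ h0
    haveI : Subsingleton M := Module.finrank_zero_iff.mp h0
    haveI : Subsingleton N := Module.finrank_zero_iff.mp h0'
    exact ⟨LinearEquiv.ofSubsingleton M N⟩
  intro d
  induction d with
  | zero =>
    intro M N _ _ _ _ _ _ _ _ _ _ _ _ hrank htr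
    exact hzero M N (Nat.le_zero.mp hrank) htr
  | succ d ih =>
    intro M N iM iN mBM mBN mKM mKN tM tN fM fN sM sN hrank htr
    rcases Nat.eq_zero_or_pos (finrank K M) with h0 | hpos
    · exact hzero M N h0 htr
    haveI : Nontrivial M := Module.nontrivial_of_finrank_pos (R := K) hpos
    obtain ⟨S, hS⟩ := IsSemisimpleModule.exists_simple_submodule B M
    haveI := hS
    set Sw : Submodule B (M × N) := S.map (LinearMap.inl B M N) with hSwdef
    have eSw : ↥S ≃ₗ[B] ↥Sw := Submodule.equivMapOfInjective _ LinearMap.inl_injective S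
    haveI hSwS : IsSimpleModule B ↥Sw := IsSimpleModule.congr eSw.symm
    set C := sSup (isoClass Sw) with hCdef
    set C' := sSup (nonIsoClass Sw) with hC'def
    have hcompl : IsCompl C C' := isCompl_isotypic Sw
    set f : (M × N) →ₗ[B] (M × N) := C.subtype ∘ₗ C.projectionOnto C' hcompl with hfdef
    have hf_memC : ∀ x, f x ∈ C := fun x => (C.projectionOnto C' hcompl x).2
    have hf_left : ∀ x ∈ C, f x = x := by
      intro x hx
      show C.subtype (C.projectionOnto C' hcompl x) = x
      rw [show x = ((⟨x, hx⟩ : C) : M × N) from rfl,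
        Submodule.projectionOnto_apply_left hcompl]
      rfl
    have hf_right : ∀ x ∈ C', f x = 0 := by
      intro x hx
      show C.subtype (C.projectionOnto C' hcompl x) = 0
      rw [show x = ((⟨x, hx⟩ : C') : M × N) from rfl,
        Submodule.projectionOnto_apply_right hcompl]
      rfl
    have hcomm : ∀ (ψ : (M × N) →ₗ[B] (M × N)) (x : M × N), f (ψ x) = ψ (f x) := by
      intro ψ x
      obtain ⟨c, c', hc, hc', hx⟩ := Submodule.codisjoint_iff_exists_add_eq.mp hcompl.codisjoint x
      have h1 : f (ψ c) = ψ c := hf_left _ (map_le_isoClass Sw ψ ⟨c, hc, rfl⟩)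
      have h2 : f (ψ c') = 0 := hf_right _ (map_le_nonIsoClass Sw ψ ⟨c', hc', rfl⟩)
      rw [← hx, map_add, map_add, map_add, h1, h2, add_zero,
        hf_left c hc, hf_right c' hc', add_zero]
    obtain ⟨b0, hb0⟩ := jacobson_density' (f := f.toAddMonoidHom)
      (fun ψ x => hcomm ψ x) (fun i => (finBasis K (M × N)) i)
    have hball : ∀ x : M × N, b0 • x = f x := by
      have heq : smulEndK K (M × N) b0 = LinearMap.restrictScalars K f :=
        Module.Basis.ext (finBasis K (M × N)) (fun i => by simpa using hb0 i)
      intro x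
      have := DFunLike.congr_fun heq x
      simpa using this
    -- the action of b0 on M and N
    have hgM : ∀ m : M, ((b0 • m : M), (0 : N)) = f (m, 0) := by
      intro m
      rw [← hball (m, (0 : N))]
      exact Prod.ext rfl (smul_zero b0).symm
    have hgN : ∀ y : N, ((0 : M), (b0 • y : N)) = f (0, y) := by
      intro y
      rw [← hball ((0 : M), y)]
      exact Prod.ext (smul_zero b0).symm rfl
    have hidemM : ∀ m : M, b0 • (b0 • m) = b0 • m := by
      intro m
      have h1 := hgM (b0 • m)
      rw [hgM m, hf_left _ (hf_memC (m, 0)), ← hgM m] at h1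
      exact congrArg Prod.fst h1
    have hidemN : ∀ y : N, b0 • (b0 • y) = b0 • y := by
      intro y
      have h1 := hgN (b0 • y)
      rw [hgN y, hf_left _ (hf_memC (0, y)), ← hgN y] at h1
      exact congrArg Prod.snd h1
    set gM := smulEndK K M b0 with hgMdef
    set gN := smulEndK K N b0 with hgNdef
    have hprojM : LinearMap.IsProj (LinearMap.range gM) gM := by
      constructor
      · intro x; exact ⟨x, rfl⟩
      · rintro x ⟨y, rfl⟩
        exact hidemM y
    have hprojN : LinearMap.IsProj (LinearMap.range gN) gN := by
      constructor
      · intro x; exact ⟨x, rfl⟩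
      · rintro x ⟨y, rfl⟩
        exact hidemN y
    -- identify ranges with intersections
    set MW := LinearMap.range (LinearMap.inl B M N) with hMWdef
    set NW := LinearMap.range (LinearMap.inr B M N) with hNWdef
    have hmapM : Submodule.map (LinearMap.inl K M N) (LinearMap.range gM)
        = (C ⊓ MW).restrictScalars K := by
      apply le_antisymm
      · rintro x ⟨m, ⟨y, rfl⟩, rfl⟩
        rw [Submodule.restrictScalars_mem, Submodule.mem_inf]
        constructor
        · have h : (LinearMap.inl K M N) (gM y) = f (y, 0) := by
            rw [← hgM y]; rfl
          rw [h]; exact hf_memC _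
        · exact ⟨gM y, rfl⟩
      · intro x hx
        rw [Submodule.restrictScalars_mem, Submodule.mem_inf] at hx
        obtain ⟨hxC, m, hm⟩ := hx
        have hx2 : x = (m, (0 : N)) := hm.symm
        subst hx2
        have hfix : f (m, (0:N)) = (m, (0:N)) := hf_left _ hxC
        have hm2 : (b0 • m : M) = m := by
          have := hgM m
          rw [hfix] at this
          exact congrArg Prod.fst this
        exact ⟨m, ⟨m, hm2⟩, rfl⟩
    have hmapN : Submodule.map (LinearMap.inr K M N) (LinearMap.range gN)
        = (C ⊓ NW).restrictScalars K := by
      apply le_antisymm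
      · rintro x ⟨y0, ⟨y, rfl⟩, rfl⟩
        rw [Submodule.restrictScalars_mem, Submodule.mem_inf]
        constructor
        · have h : (LinearMap.inr K M N) (gN y) = f (0, y) := by
            rw [← hgN y]; rfl
          rw [h]; exact hf_memC _
        · exact ⟨gN y, rfl⟩
      · intro x hx
        rw [Submodule.restrictScalars_mem, Submodule.mem_inf] at hx
        obtain ⟨hxC, y, hy⟩ := hx
        have hx2 : x = ((0 : M), y) := hy.symm
        subst hx2
        have hfix : f ((0:M), y) = ((0:M), y) := hf_left _ hxC
        have hy2 : (b0 • y : N) = y := by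
          have := hgN y
          rw [hfix] at this
          exact congrArg Prod.snd this
        exact ⟨y, ⟨y, hy2⟩, rfl⟩
    have hfinM : finrank K ↥(LinearMap.range gM) = finrank K ↥((C ⊓ MW).restrictScalars K) := by
      rw [← hmapM]
      exact (Submodule.equivMapOfInjective _ LinearMap.inl_injective _).finrank_eq
    have hfinN : finrank K ↥(LinearMap.range gN) = finrank K ↥((C ⊓ NW).restrictScalars K) := by
      rw [← hmapN]
      exact (Submodule.equivMapOfInjective _ LinearMap.inr_injective _).finrank_eq
    -- traces of the idempotents
    have htrM : trace K M gM = (finrank K ↥((C ⊓ MW).restrictScalars K) : K) := by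
      rw [hprojM.trace, hfinM]
    have htrN : trace K N gN = (finrank K ↥((C ⊓ NW).restrictScalars K) : K) := by
      rw [hprojN.trace, hfinN]
    have hfr : finrank K ↥((C ⊓ MW).restrictScalars K) = finrank K ↥((C ⊓ NW).restrictScalars K) := by
      have := htr b0
      rw [← hgMdef, ← hgNdef, htrM, htrN] at this
      exact_mod_cast this
    -- positivity on the M side
    have hSwle : Sw ≤ C ⊓ MW := by
      apply le_inf
      · exact le_sSup ⟨hSwS, ⟨LinearEquiv.refl B ↥Sw⟩⟩
      · rw [hSwdef]; exact LinearMap.map_le_range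
    have hposM : 0 < finrank K ↥((C ⊓ MW).restrictScalars K) := by
      haveI := hSwS.nontrivial
      obtain ⟨z, hz⟩ := exists_ne (0 : ↥Sw)
      haveI : Nontrivial ↥((C ⊓ MW).restrictScalars K) := by
        refine ⟨⟨⟨z.1, ?_⟩, 0, ?_⟩⟩
        · rw [Submodule.restrictScalars_mem]
          exact hSwle z.2
        · intro h
          apply hz
          have : (z : M × N) = 0 := congrArg Subtype.val h
          exact Subtype.ext this
      exact Module.finrank_pos
    have hposN : 0 < finrank K ↥((C ⊓ NW).restrictScalars K) := hfr ▸ hposM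
    -- find a simple submodule of N isomorphic to S
    have hCNne : C ⊓ NW ≠ ⊥ := by
      intro h
      rw [h] at hposN
      exact hposN.ne' (Submodule.finrank_eq_zero.mpr (Submodule.restrictScalars_bot _ _ _))
    obtain hbot | ⟨T, hTle, hTsimple⟩ := IsSemisimpleModule.eq_bot_or_exists_simple_le (C ⊓ NW)
    · exact absurd hbot hCNne
    haveI := hTsimple
    obtain ⟨U, hU, ⟨eTU⟩⟩ := simple_le_sSup_iso (fun _ h => h.1) hTsimple (hTle.trans inf_le_left)
    have eTS : ↥T ≃ₗ[B] ↥S := (eTU.trans hU.2.some).trans eSw.symm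
    set SN : Submodule B N := T.comap (LinearMap.inr B M N) with hSNdef
    have hmapSN : SN.map (LinearMap.inr B M N) = T := by
      rw [hSNdef, Submodule.map_comap_eq]
      exact inf_eq_right.mpr (hTle.trans inf_le_right)
    have eSNT : ↥SN ≃ₗ[B] ↥T :=
      (Submodule.equivMapOfInjective (LinearMap.inr B M N) LinearMap.inr_injective SN).trans
        (LinearEquiv.ofEq _ _ hmapSN)
    haveI hSNsimple : IsSimpleModule B ↥SN := IsSimpleModule.congr eSNT
    have eSN_S : ↥SN ≃ₗ[B] ↥S := eSNT.trans eTS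
    -- split off the simple summands
    obtain ⟨Ms, hMs⟩ := exists_isCompl S
    obtain ⟨Ns, hNs⟩ := exists_isCompl SN
    have htr' : ∀ b : B, trace K ↥Ms (smulEndK K ↥Ms b) = trace K ↥Ns (smulEndK K ↥Ns b) := by
      intro b
      have e1 := trace_smulEndK_isCompl K hMs b
      have e2 := trace_smulEndK_isCompl K hNs b
      have e3 := trace_smulEndK_eq_of_equiv K eSN_S b
      have e4 := htr b
      rw [e1, e2, e3] at e4
      exact add_left_cancel e4
    have hsum : finrank K M = finrank K ↥S + finrank K ↥Ms := by
      have h1 := trace_smulEndK_isCompl K hMs (1 : B)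
      rw [trace_smulEndK_one, trace_smulEndK_one, trace_smulEndK_one] at h1
      exact_mod_cast h1
    have hSpos : 0 < finrank K ↥S := by
      haveI := hS.nontrivial
      exact Module.finrank_pos
    have hMsle : finrank K ↥Ms ≤ d := by omega
    obtain ⟨eRest⟩ := ih ↥Ms ↥Ns hMsle htr'
    exact ⟨((Submodule.prodEquivOfIsCompl S Ms hMs).symm.trans
      (LinearEquiv.prodCongr eSN_S.symm eRest)).trans (Submodule.prodEquivOfIsCompl SN Ns hNs)⟩

-- ===================== glue: matrix representations as modules =====================

noncomputable section RepGlue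

open Paper LinearMap Module

variable {K : Type} [Field K] {Γ : Type} [Group Γ] {n : ℕ}

/-- A `GLₙ` representation as a `Representation` on `Fin n → K`. -/
def toRepn (r : Γ →* GLn n K) : Representation K Γ (Fin n → K) where
  toFun γ := ((r γ : Matrix (Fin n) (Fin n) K)).mulVecLin
  map_one' := by
    simp only [map_one, Units.val_one, Matrix.mulVecLin_one]
    rfl
  map_mul' γ δ := by
    simp only [map_mul, Units.val_mul, Matrix.mulVecLin_mul]
    rfl

/-- Type synonym for `Fin n → K` carrying the `MonoidAlgebra K Γ`-module structure
induced by the representation `r`. -/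
def RepMod (_r : Γ →* GLn n K) : Type := Fin n → K

instance (r : Γ →* GLn n K) : AddCommGroup (RepMod r) :=
  inferInstanceAs (AddCommGroup (Fin n → K))

instance (r : Γ →* GLn n K) : Module K (RepMod r) :=
  inferInstanceAs (Module K (Fin n → K))

instance (r : Γ →* GLn n K) : FiniteDimensional K (RepMod r) :=
  inferInstanceAs (FiniteDimensional K (Fin n → K))

noncomputable instance (r : Γ →* GLn n K) : Module (MonoidAlgebra K Γ) (RepMod r) :=
  Module.compHom (Fin n → K) (toRepn r).asAlgebraHom.toRingHom

lemma RepMod.smul_def (r : Γ →* GLn n K) (b : MonoidAlgebra K Γ) (x : RepMod r) :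
    b • x = (toRepn r).asAlgebraHom b (x : Fin n → K) := rfl

instance (r : Γ →* GLn n K) : IsScalarTower K (MonoidAlgebra K Γ) (RepMod r) := by
  constructor
  intro k b x
  show (toRepn r).asAlgebraHom (k • b) (x : Fin n → K)
    = k • ((toRepn r).asAlgebraHom b (x : Fin n → K))
  rw [map_smul]
  rfl

lemma RepMod.of_smul (r : Γ →* GLn n K) (γ : Γ) (x : RepMod r) :
    (MonoidAlgebra.of K Γ γ) • x
      = Matrix.mulVec ((r γ : Matrix (Fin n) (Fin n) K)) (x : Fin n → K) := by
  rw [RepMod.smul_def, Representation.asAlgebraHom_of]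
  rfl

/-- Identity casts between `RepMod r` and `Fin n → K`. -/
def RepMod.mk (r : Γ →* GLn n K) (x : Fin n → K) : RepMod r := x

def RepMod.out {r : Γ →* GLn n K} (x : RepMod r) : Fin n → K := x

/-- The identity as a `K`-linear equivalence between `RepMod r` and `Fin n → K`. -/
def RepMod.idEquiv (r : Γ →* GLn n K) : RepMod r ≃ₗ[K] (Fin n → K) where
  toFun x := x
  invFun x := x
  map_add' _ _ := rfl
  map_smul' _ _ := rfl
  left_inv _ := rfl
  right_inv _ := rfl

theorem repMod_semisimple (r : Γ →* GLn n K) (hss : SemisimpleSet (Set.range r)) :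
    IsSemisimpleModule (MonoidAlgebra K Γ) (RepMod r) := by
  refine { toComplementedLattice := ⟨?_⟩ }
  intro U
  set UK : Submodule K (Fin n → K) := U.restrictScalars K with hUK
  have hmemUK : ∀ x : Fin n → K, x ∈ UK ↔ RepMod.mk r x ∈ U := fun x => Iff.rfl
  have hstab : StabSet (Set.range r) UK := by
    rintro g ⟨γ, rfl⟩ x hx
    rw [hmemUK]
    have h2 : RepMod.mk r (Matrix.mulVec ((r γ : Matrix (Fin n) (Fin n) K)) x)
        = (MonoidAlgebra.of K Γ γ) • (RepMod.mk r x) := (RepMod.of_smul r γ (RepMod.mk r x)).symm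
    rw [h2]
    exact U.smul_mem _ ((hmemUK x).mp hx)
  obtain ⟨W', hstab', hcompl⟩ := hss UK hstab
  have hsmulW' : ∀ (b : MonoidAlgebra K Γ) (x : RepMod r),
      RepMod.out x ∈ W' → RepMod.out (b • x) ∈ W' := by
    intro b
    induction b using MonoidAlgebra.induction_on with
    | of γ =>
      intro x hx
      have h3 : RepMod.out ((MonoidAlgebra.of K Γ γ) • x)
          = Matrix.mulVec ((r γ : Matrix (Fin n) (Fin n) K)) (RepMod.out x) :=
        RepMod.of_smul r γ x
      rw [h3]
      exact hstab' (r γ) ⟨γ, rfl⟩ (RepMod.out x) hx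
    | add f g hf hg =>
      intro x hx
      rw [add_smul]
      exact W'.add_mem (hf x hx) (hg x hx)
    | smul k f hf =>
      intro x hx
      rw [smul_assoc]
      exact W'.smul_mem k (hf x hx)
  refine ⟨{ carrier := {x : RepMod r | RepMod.out x ∈ W'},
            add_mem' := fun ha hb => W'.add_mem ha hb,
            zero_mem' := W'.zero_mem,
            smul_mem' := fun b x hx => hsmulW' b x hx }, ?_⟩
  constructor
  · rw [disjoint_iff, eq_bot_iff]
    intro x hx
    have h1 : (x : Fin n → K) ∈ UK ⊓ W' := ⟨hx.1, hx.2⟩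
    rw [hcompl.inf_eq_bot] at h1
    exact (Submodule.mem_bot _).mpr ((Submodule.mem_bot K).mp h1)
  · rw [codisjoint_iff, eq_top_iff]
    intro x _
    obtain ⟨y, z, hy, hz, hyz⟩ :=
      Submodule.codisjoint_iff_exists_add_eq.mp hcompl.codisjoint (RepMod.out x)
    exact Submodule.mem_sup.mpr ⟨RepMod.mk r y, hy, RepMod.mk r z, hz, hyz⟩

theorem trace_mulVecLin (A : Matrix (Fin n) (Fin n) K) :
    trace K (Fin n → K) (Matrix.mulVecLin A) = A.trace := by
  rw [trace_eq_matrix_trace K (Pi.basisFun K (Fin n))]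
  congr 1
  rw [LinearMap.toMatrix_eq_toMatrix']
  exact LinearMap.toMatrix'.apply_symm_apply A

theorem trace_repMod (r : Γ →* GLn n K) (b : MonoidAlgebra K Γ) :
    trace K (RepMod r) (smulEndK K (RepMod r) b)
      = trace K (Fin n → K) ((toRepn r).asAlgebraHom b) := by
  have hc : (RepMod.idEquiv r).conj (smulEndK K (RepMod r) b)
      = (toRepn r).asAlgebraHom b := by
    ext x
    rfl
  rw [← hc, trace_conj']

theorem trace_smulEndK_eq_of_matrix_traces (r r' : Γ →* GLn n K)
    (h : ∀ γ, ((r γ : Matrix (Fin n) (Fin n) K)).trace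
      = ((r' γ : Matrix (Fin n) (Fin n) K)).trace) (b : MonoidAlgebra K Γ) :
    trace K (RepMod r) (smulEndK K (RepMod r) b)
      = trace K (RepMod r') (smulEndK K (RepMod r') b) := by
  rw [trace_repMod, trace_repMod]
  induction b using MonoidAlgebra.induction_on with
  | of γ =>
    rw [Representation.asAlgebraHom_of, Representation.asAlgebraHom_of]
    show trace K (Fin n → K) (Matrix.mulVecLin _) = trace K (Fin n → K) (Matrix.mulVecLin _)
    rw [trace_mulVecLin, trace_mulVecLin]
    exact h γ
  | add f g hf hg =>
    rw [map_add, map_add, map_add, map_add, hf, hg]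
  | smul k f hf =>
    rw [map_smul, map_smul, map_smul, map_smul, hf]

theorem conj_of_repMod_iso (r r' : Γ →* GLn n K)
    (e : RepMod r ≃ₗ[MonoidAlgebra K Γ] RepMod r') :
    ∃ P : GLn n K, ∀ γ, r' γ = P * r γ * P⁻¹ := by
  let eK : (Fin n → K) ≃ₗ[K] (Fin n → K) :=
    ((RepMod.idEquiv r).symm.trans (e.restrictScalars K)).trans (RepMod.idEquiv r')
  have hcomm : ∀ (γ : Γ) (x : Fin n → K),
      eK (Matrix.mulVec ((r γ : Matrix (Fin n) (Fin n) K)) x)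
        = Matrix.mulVec ((r' γ : Matrix (Fin n) (Fin n) K)) (eK x) := by
    intro γ x
    have h1 : RepMod.mk r (Matrix.mulVec ((r γ : Matrix (Fin n) (Fin n) K)) x)
        = (MonoidAlgebra.of K Γ γ) • (RepMod.mk r x) := (RepMod.of_smul r γ (RepMod.mk r x)).symm
    show RepMod.out (e (RepMod.mk r (Matrix.mulVec ((r γ : Matrix (Fin n) (Fin n) K)) x))) = _
    rw [h1, map_smul]
    exact RepMod.of_smul r' γ (e (RepMod.mk r x))
  set P : Matrix (Fin n) (Fin n) K := LinearMap.toMatrix' (eK : (Fin n → K) →ₗ[K] (Fin n → K)) with hP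
  set Q : Matrix (Fin n) (Fin n) K := LinearMap.toMatrix' (eK.symm : (Fin n → K) →ₗ[K] (Fin n → K)) with hQ
  have hPQ : P * Q = 1 := by
    rw [hP, hQ, ← LinearMap.toMatrix'_comp]
    have : (eK : (Fin n → K) →ₗ[K] (Fin n → K)) ∘ₗ (eK.symm : (Fin n → K) →ₗ[K] (Fin n → K)) = LinearMap.id := by
      ext x
      simp
    rw [this, LinearMap.toMatrix'_id]
  have hQP : Q * P = 1 := by
    rw [hP, hQ, ← LinearMap.toMatrix'_comp]
    have : (eK.symm : (Fin n → K) →ₗ[K] (Fin n → K)) ∘ₗ (eK : (Fin n → K) →ₗ[K] (Fin n → K)) = LinearMap.id := by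
      ext x
      simp
    rw [this, LinearMap.toMatrix'_id]
  refine ⟨⟨P, Q, hPQ, hQP⟩, ?_⟩
  intro γ
  apply Units.ext
  show ((r' γ : Matrix (Fin n) (Fin n) K)) = P * (r γ : Matrix (Fin n) (Fin n) K) * Q
  have hlin : (eK : (Fin n → K) →ₗ[K] (Fin n → K)) ∘ₗ
      (Matrix.mulVecLin ((r γ : Matrix (Fin n) (Fin n) K))) ∘ₗ
      (eK.symm : (Fin n → K) →ₗ[K] (Fin n → K))
      = Matrix.mulVecLin ((r' γ : Matrix (Fin n) (Fin n) K)) := by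
    apply LinearMap.ext
    intro x
    simp only [LinearMap.comp_apply, Matrix.mulVecLin_apply, LinearEquiv.coe_coe]
    rw [hcomm γ (eK.symm x), LinearEquiv.apply_symm_apply]
  have hAM : ∀ A : Matrix (Fin n) (Fin n) K, LinearMap.toMatrix' (Matrix.mulVecLin A) = A :=
    fun A => LinearMap.toMatrix'.apply_symm_apply A
  have h5 := congrArg (fun f => LinearMap.toMatrix' f) hlin
  rw [LinearMap.toMatrix'_comp, LinearMap.toMatrix'_comp, hAM, hAM, ← hP, ← hQ] at h5
  rw [← h5, mul_assoc]

theorem matrix_trace_map {R S : Type*} [CommRing R] [CommRing S] (f : R →+* S)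
    (M : Matrix (Fin n) (Fin n) R) : (M.map f).trace = f M.trace := by
  simp only [Matrix.trace, Matrix.diag_apply, Matrix.map_apply, map_sum]

theorem toBar_val {k : Type} [Field k] (g : GLn n k) :
    ((toBar g : GLn n (AlgebraicClosure k)) : Matrix (Fin n) (Fin n) (AlgebraicClosure k))
      = ((g : Matrix (Fin n) (Fin n) k)).map (algebraMap k (AlgebraicClosure k)) := rfl

theorem trace_toBar {k : Type} [Field k] (g : GLn n k) :
    ((toBar g : GLn n (AlgebraicClosure k)) : Matrix (Fin n) (Fin n) (AlgebraicClosure k)).trace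
      = algebraMap k (AlgebraicClosure k) ((g : Matrix (Fin n) (Fin n) k)).trace := by
  rw [toBar_val, matrix_trace_map]

/-- Brauer–Nesbitt: semisimple `GLₙ` representations over a char-0 field with equal
traces are conjugate. -/
theorem conj_of_semisimple_of_traceEq [CharZero K] (r r' : Γ →* GLn n K)
    (hssr : SemisimpleSet (Set.range r)) (hssr' : SemisimpleSet (Set.range r'))
    (htr : ∀ γ, ((r γ : Matrix (Fin n) (Fin n) K)).trace
      = ((r' γ : Matrix (Fin n) (Fin n) K)).trace) :
    ∃ P : GLn n K, ∀ γ, r' γ = P * r γ * P⁻¹ := by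
  haveI := repMod_semisimple r hssr
  haveI := repMod_semisimple r' hssr'
  obtain ⟨e⟩ := iso_of_traceEq (MonoidAlgebra K Γ) K (finrank K (RepMod r))
    (RepMod r) (RepMod r') le_rfl (trace_smulEndK_eq_of_matrix_traces r r' htr)
  exact conj_of_repMod_iso r r' e

end RepGlue

/-- Let `(Γ, {F_α})` be a group with Frobenii and let `ℛ = {ρ_λ}` and `ℛ' = {ρ'_λ}` be two
compatible systems of rank `n` semisimple representations of `Γ` defined over a number
field `E`, with a common witnessing set `𝒳 ⊆ A × Λ`.  If `ρ_{λ₀} ≅ ρ'_{λ₀}` for some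
`λ₀ ∈ Λ`, then `ρ_λ ≅ ρ'_λ` for every `λ ∈ Λ`. -/
theorem isomorphism_propagates_in_compatible_systems
    {Γ A : Type} [Group Γ] [TopologicalSpace Γ] [IsTopologicalGroup Γ] [CompactSpace Γ]
    [TotallyDisconnectedSpace Γ]
    (Fr : A → Γ) (hFr : DenseRange Fr)
    (E : Type) [Field E] [NumberField E] (n : ℕ)
    (Λ : Set (Places E)) (hΛ : ResidualDensityOne Λ)
    (ρ ρ' : ∀ v : Places E, Γ →* GLn n (Kv E v))
    (X : Set (A × Places E))
    (hcs : IsCompatibleSystem Fr E n Λ ρ X)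
    (hcs' : IsCompatibleSystem Fr E n Λ ρ' X)
    (hss : ∀ v ∈ Λ, SemisimpleRep (ρ v))
    (hss' : ∀ v ∈ Λ, SemisimpleRep (ρ' v))
    (v₀ : Places E) (hv₀ : v₀ ∈ Λ)
    (hiso : IsoOverBar (ρ v₀) (ρ' v₀)) :
    ∀ v ∈ Λ, IsoOverBar (ρ v) (ρ' v) := by
  intro v hv
  -- the trivial case `n = 0`
  rcases Nat.eq_zero_or_pos n with hn0 | hnpos
  · subst hn0
    exact ⟨1, fun γ => Units.ext (Matrix.ext fun i _ => i.elim0)⟩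
  haveI : Nonempty (Fin n) := ⟨⟨0, hnpos⟩⟩
  -- characteristic zero instances
  haveI hchar : ∀ w : Places E, CharZero (Kv E w) := fun w =>
    charZero_of_injective_algebraMap (algebraMap E (Kv E w)).injective
  haveI : CharZero (AlgebraicClosure (Kv E v)) :=
    charZero_of_injective_algebraMap
      (algebraMap (Kv E v) (AlgebraicClosure (Kv E v))).injective
  -- trace equality at `v₀`, for all group elements
  have htr0 : ∀ γ : Γ,
      ((ρ v₀ γ : GLn n (Kv E v₀)) : Matrix (Fin n) (Fin n) (Kv E v₀)).trace
        = ((ρ' v₀ γ : GLn n (Kv E v₀)) : Matrix (Fin n) (Fin n) (Kv E v₀)).trace := by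
    intro γ
    obtain ⟨P₀, hP₀⟩ := hiso
    have h1 := congrArg
      (fun u : GLn n (AlgebraicClosure (Kv E v₀)) =>
        ((u : Matrix (Fin n) (Fin n) (AlgebraicClosure (Kv E v₀)))).trace) (hP₀ γ)
    simp only [Units.val_mul] at h1
    rw [Matrix.trace_units_conj, trace_toBar, trace_toBar] at h1
    exact ((algebraMap (Kv E v₀) (AlgebraicClosure (Kv E v₀))).injective h1).symm
  -- extracting traces from characteristic polynomials
  have key : ∀ (w : Places E) (g : GLn n (Kv E w)) (q : Polynomial E),
      ((g : Matrix (Fin n) (Fin n) (Kv E w)).charpoly = q.map (algebraMap E (Kv E w))) →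
      (g : Matrix (Fin n) (Fin n) (Kv E w)).trace
        = algebraMap E (Kv E w) (-(q.coeff (Fintype.card (Fin n) - 1))) := by
    intro w g q hq
    rw [Matrix.trace_eq_neg_charpoly_coeff, hq, Polynomial.coeff_map, map_neg]
  -- trace equality at `v` on a dense set, hence everywhere, by continuity
  have hfuneq :
      (fun γ : Γ => ((ρ v γ : GLn n (Kv E v)) : Matrix (Fin n) (Fin n) (Kv E v)).trace)
        = (fun γ : Γ =>
          ((ρ' v γ : GLn n (Kv E v)) : Matrix (Fin n) (Fin n) (Kv E v)).trace) := by
    have hdense := hcs.frob_dense 2 ![v₀, v] (by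
      intro i
      fin_cases i
      · exact hv₀
      · exact hv)
    refine Continuous.ext_on hdense ?_ ?_ ?_
    · exact Continuous.matrix_trace (Units.continuous_val.comp (hcs.continuous v hv))
    · exact Continuous.matrix_trace (Units.continuous_val.comp (hcs'.continuous v hv))
    · rintro x ⟨α, hα, rfl⟩
      obtain ⟨q, hq⟩ := hcs.charpoly_indep α
      obtain ⟨q', hq'⟩ := hcs'.charpoly_indep α
      have h0 : (α, v₀) ∈ X := by simpa using hα 0
      have h1 : (α, v) ∈ X := by simpa using hα 1
      have e0 := key v₀ (ρ v₀ (Fr α)) q (hq v₀ h0)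
      have e0' := key v₀ (ρ' v₀ (Fr α)) q' (hq' v₀ h0)
      have ecoeff : q.coeff (Fintype.card (Fin n) - 1)
          = q'.coeff (Fintype.card (Fin n) - 1) := by
        have h2 := htr0 (Fr α)
        rw [e0, e0'] at h2
        have h3 := (algebraMap E (Kv E v₀)).injective h2
        exact neg_injective h3
      show ((ρ v (Fr α) : GLn n (Kv E v)) : Matrix (Fin n) (Fin n) (Kv E v)).trace
        = ((ρ' v (Fr α) : GLn n (Kv E v)) : Matrix (Fin n) (Fin n) (Kv E v)).trace
      rw [key v (ρ v (Fr α)) q (hq v h1), key v (ρ' v (Fr α)) q' (hq' v h1), ecoeff]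
  have htrv : ∀ γ : Γ,
      ((ρ v γ : GLn n (Kv E v)) : Matrix (Fin n) (Fin n) (Kv E v)).trace
        = ((ρ' v γ : GLn n (Kv E v)) : Matrix (Fin n) (Fin n) (Kv E v)).trace :=
    fun γ => congrFun hfuneq γ
  -- push trace equality to the algebraic closure
  set r : Γ →* GLn n (AlgebraicClosure (Kv E v)) := toBar.comp (ρ v) with hrdef
  set r' : Γ →* GLn n (AlgebraicClosure (Kv E v)) := toBar.comp (ρ' v) with hr'def
  have htrbar : ∀ γ : Γ,
      ((r γ : GLn n (AlgebraicClosure (Kv E v)))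
        : Matrix (Fin n) (Fin n) (AlgebraicClosure (Kv E v))).trace
        = ((r' γ : GLn n (AlgebraicClosure (Kv E v)))
        : Matrix (Fin n) (Fin n) (AlgebraicClosure (Kv E v))).trace := by
    intro γ
    show ((toBar (ρ v γ) : GLn n (AlgebraicClosure (Kv E v)))
        : Matrix (Fin n) (Fin n) (AlgebraicClosure (Kv E v))).trace
      = ((toBar (ρ' v γ) : GLn n (AlgebraicClosure (Kv E v)))
        : Matrix (Fin n) (Fin n) (AlgebraicClosure (Kv E v))).trace
    rw [trace_toBar, trace_toBar, htrv γ]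
  have hssr : SemisimpleSet (Set.range r) := hss v hv
  have hssr' : SemisimpleSet (Set.range r') := hss' v hv
  obtain ⟨P, hP⟩ := conj_of_semisimple_of_traceEq r r' hssr hssr' htrbar
  exact ⟨P, fun γ => hP γ⟩
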